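/- For every integer k ≥ 1 and every integer j with 0 ≤ j ≤ k+1, if d(0, 1, s, k, 0) ≠ 0 and all factors in the denominator of ⟨k+1, j⟩(x,s,q) are nonzero, then d(0, 1, s, k, j) / d(0, 1, s, k, 0) = (−s)^{binom(j,2) − k·j} · q^{−k·binom(j,2) + ∑_{i=0}^{j−1} i^2} · ⟨k+1, j⟩(x,s,q), where powers with negative integer exponents are interpreted as integer powers of nonzero field elements. -/

import Mathlib

open Finset

variable {K : Type*} [Field K]

noncomputable def qFibPos (q x t : K) : ℕ → K
  | 0 => 0
  | 1 => 1
  | n + 2 => x * qFibPos q x t (n + 1) + q ^ n * t * qFibPos q x t n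

noncomputable def qFibNeg (q x t : K) : ℕ → K
  | 0 => 0
  | 1 => q / t
  | m + 2 => (qFibNeg q x t m - x * qFibNeg q x t (m + 1)) * q ^ (m + 2) / t

/-- The Carlitz q-Fibonacci polynomial `f(n, x, t)` for `n : ℤ`, defined by `f 0 = 0`,
`f 1 = 1` and `f n = x * f (n-1) + q^(n-2) * t * f (n-2)`, solved backwards for `n < 0`. -/
noncomputable def qFib (q x t : K) : ℤ → K
  | Int.ofNat n => qFibPos q x t n
  | Int.negSucc m => qFibNeg q x t (m + 1)

/-- `fac(k, x, t, m) = ∏_{i=1}^{k} f(i·m, x, t)`. -/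
noncomputable def qFac (q x t : K) (k m : ℕ) : K :=
  ∏ i ∈ Finset.range k, qFib q x t (((i : ℤ) + 1) * m)

/-- The determinant
`d(n, m, s, k, j) = det( f(n+m(i+[i≥j]),x,s)^h · f(n+m(i+[i≥j])-1,x,qs)^{k-h} )_{i,h=0}^{k}`. -/
noncomputable def ddet (q x s : K) (n : ℤ) (m k j : ℕ) : K :=
  Matrix.det (Matrix.of fun i h : Fin (k + 1) =>
    qFib q x s (n + m * ((i : ℕ) + if j ≤ (i : ℕ) then 1 else 0)) ^ (h : ℕ) *
      qFib q x (q * s) (n + m * ((i : ℕ) + if j ≤ (i : ℕ) then 1 else 0) - 1) ^ (k - (h : ℕ)))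

/-- The q-analog of the fibonomial coefficient
`⟨k, j⟩(x,s,q) = (∏_{i=1}^{k} f(i,x,s)) / (∏_{i=1}^{j} f(i,x,q^{j-i}s) · ∏_{i=1}^{k-j} f(i,x,q^j s))`. -/
noncomputable def qFibonomial (q x s : K) (k j : ℕ) : K :=
  (∏ i ∈ Finset.range k, qFib q x s (i + 1)) /
    ((∏ i ∈ Finset.range j, qFib q x (q ^ (j - (i + 1)) * s) (i + 1)) *
      (∏ i ∈ Finset.range (k - j), qFib q x (q ^ j * s) (i + 1)))

/-! ### Auxiliary lemmas -/

lemma qFib_natCast (q x t : K) (n : ℕ) : qFib q x t (n : ℤ) = qFibPos q x t n := rfl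

lemma qFib_neg_one (q x t : K) : qFib q x t (-1) = q / t := rfl

lemma qFibPos_add_two (q x t : K) (n : ℕ) :
    qFibPos q x t (n+2) = x * qFibPos q x t (n + 1) + q ^ n * t * qFibPos q x t n := rfl

/-- The constant `c(b)` in the Carlitz determinant identity. -/
noncomputable def ccc (q s : K) (b : ℕ) : K := (-s) ^ b * q ^ (b.choose 2) / s

lemma ccc_succ (q s : K) (b : ℕ) : ccc q s (b+1) = -(q ^ b * s) * ccc q s b := by
  simp only [ccc, Nat.choose_succ_succ, Nat.choose_one_right, pow_add, pow_succ]
  ring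

lemma ccc_ne_zero {q s : K} (hq : q ≠ 0) (hs : s ≠ 0) (b : ℕ) : ccc q s b ≠ 0 := by
  simp only [ccc]
  exact div_ne_zero (mul_ne_zero (pow_ne_zero _ (neg_ne_zero.mpr hs)) (pow_ne_zero _ hq)) hs

lemma prod_pair_mul {m : ℕ} (f : Fin (m+1) → K) :
    ∏ i, ∏ l ∈ Ioi i, (f i * f l) = ∏ i, f i ^ m := by
  have h1 : ∏ i : Fin (m+1), ∏ l ∈ Ioi i, (f i * f l)
      = (∏ i : Fin (m+1), f i ^ (Ioi i).card) * ∏ i : Fin (m+1), ∏ l ∈ Ioi i, f l := by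
    rw [← Finset.prod_mul_distrib]
    exact Finset.prod_congr rfl fun i _ => by rw [Finset.prod_mul_distrib, Finset.prod_const]
  have h2 : ∏ i : Fin (m+1), ∏ l ∈ Ioi i, f l = ∏ l : Fin (m+1), f l ^ (Iio l).card := by
    rw [Finset.prod_comm' (t' := univ) (s' := fun l => Iio l) (by simp)]
    exact Finset.prod_congr rfl fun l _ => Finset.prod_const _
  rw [h1, h2, ← Finset.prod_mul_distrib]
  refine Finset.prod_congr rfl fun i _ => ?_
  rw [← pow_add, Fin.card_Ioi, Fin.card_Iio]
  congr 1
  omega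

lemma biVan_aux {F : Type*} [Field F] (m : ℕ) (X Y : Fin (m+1) → F) (hY : ∀ i, Y i ≠ 0) :
    Matrix.det (Matrix.of fun i h : Fin (m+1) => X i ^ (h:ℕ) * Y i ^ (m - (h:ℕ))) =
      ∏ i, ∏ l ∈ Ioi i, (X l * Y i - X i * Y l) := by
  have hM : (Matrix.of fun i h : Fin (m+1) => X i ^ (h:ℕ) * Y i ^ (m - (h:ℕ)))
      = Matrix.of fun i h : Fin (m+1) => (Y i ^ m) * Matrix.vandermonde (fun i => X i / Y i) i h := by
    ext i h
    simp only [Matrix.of_apply, Matrix.vandermonde]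
    have hm : Y i ^ m = Y i ^ (m - (h:ℕ)) * Y i ^ (h:ℕ) := by
      rw [← pow_add]; congr 1; have := h.is_le; omega
    rw [div_pow, hm, mul_assoc, mul_comm (Y i ^ (h:ℕ)), div_mul_cancel₀ _ (pow_ne_zero _ (hY i))]
    ring
  rw [hM, Matrix.det_mul_column, Matrix.det_vandermonde, ← prod_pair_mul Y,
    ← Finset.prod_mul_distrib]
  refine Finset.prod_congr rfl fun i _ => ?_
  rw [← Finset.prod_mul_distrib]
  refine Finset.prod_congr rfl fun l hl => ?_
  have h1 := hY i; have h2 := hY l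
  field_simp
lemma biVandermonde (m : ℕ) (X Y : Fin (m+1) → K) :
    Matrix.det (Matrix.of fun i h : Fin (m+1) => X i ^ (h:ℕ) * Y i ^ (m - (h:ℕ))) =
      ∏ i, ∏ l ∈ Ioi i, (X l * Y i - X i * Y l) := by
  let φ : Polynomial K →+* FractionRing (Polynomial K) := algebraMap _ _
  have hinj : Function.Injective φ := IsFractionRing.injective _ _
  have hYp0 : ∀ i, (Polynomial.C (Y i) + Polynomial.X : Polynomial K) ≠ 0 := by
    intro i h0
    have := congrArg (fun p => Polynomial.coeff p 1) h0
    simp at this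
  have keyA : Matrix.det (Matrix.of fun i h : Fin (m+1) =>
        (Polynomial.C (X i)) ^ (h:ℕ) * (Polynomial.C (Y i) + Polynomial.X) ^ (m - (h:ℕ))) =
      ∏ i, ∏ l ∈ Ioi i, (Polynomial.C (X l) * (Polynomial.C (Y i) + Polynomial.X)
        - Polynomial.C (X i) * (Polynomial.C (Y l) + Polynomial.X)) := by
    apply hinj
    have := biVan_aux m (fun i => φ (Polynomial.C (X i)))
      (fun i => φ (Polynomial.C (Y i) + Polynomial.X))
      (fun i h0 => hYp0 i (hinj (by simpa using h0)))
    rw [RingHom.map_det]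
    have hmat : φ.mapMatrix (Matrix.of fun i h : Fin (m+1) =>
          (Polynomial.C (X i)) ^ (h:ℕ) * (Polynomial.C (Y i) + Polynomial.X) ^ (m - (h:ℕ)))
        = Matrix.of fun i h : Fin (m+1) => (φ (Polynomial.C (X i))) ^ (h:ℕ) *
            (φ (Polynomial.C (Y i) + Polynomial.X)) ^ (m - (h:ℕ)) := by
      ext i h; simp
    rw [hmat, this, map_prod]
    refine Finset.prod_congr rfl fun i _ => ?_
    rw [map_prod]
    exact Finset.prod_congr rfl fun l _ => by simp
  have := congrArg (Polynomial.evalRingHom (0:K)) keyA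
  rw [RingHom.map_det] at this
  have hmat : (Polynomial.evalRingHom (0:K)).mapMatrix (Matrix.of fun i h : Fin (m+1) =>
        (Polynomial.C (X i)) ^ (h:ℕ) * (Polynomial.C (Y i) + Polynomial.X) ^ (m - (h:ℕ)))
      = Matrix.of fun i h : Fin (m+1) => X i ^ (h:ℕ) * Y i ^ (m - (h:ℕ)) := by
    ext i h; simp
  rw [hmat] at this
  rw [this, map_prod]
  refine Finset.prod_congr rfl fun i _ => ?_
  rw [map_prod]
  exact Finset.prod_congr rfl fun l _ => by simp

lemma ccVal (q x s : K) (hs : s ≠ 0) (b : ℕ) :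
    qFibPos q x s (b+2) * qFibPos q x (q*s) b
      - qFibPos q x s (b+1) * qFibPos q x (q*s) (b+1) = ccc q s (b+1) := by
  induction b with
  | zero =>
    simp only [Nat.zero_add, show (0:ℕ)+2 = 2 from rfl, show (0:ℕ)+1 = 1 from rfl]
    show qFibPos q x s 2 * 0 - 1 * 1 = _
    simp only [ccc, qFibPos, pow_one, Nat.choose_self, pow_zero]
    field_simp
    norm_num [Nat.choose]
  | succ b ih =>
    rw [ccc_succ]
    rw [show b+1+2 = b+3 from rfl, show b+3 = (b+1)+2 from rfl, qFibPos_add_two,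
      show b+1+1 = b+2 from rfl, qFibPos_add_two q x (q*s) b]
    rw [← ih]
    ring

lemma keyE' (q x s : K) (hs : s ≠ 0) (b d : ℕ) :
    qFibPos q x s (b+1+d) * qFibPos q x (q*s) b
      - qFibPos q x s (b+1) * qFibPos q x (q*s) (b+d) =
    ccc q s (b+1) * qFibPos q x (q^(b+1)*s) d := by
  induction d using Nat.twoStepInduction with
  | zero => simp [qFibPos]
  | one =>
    have := ccVal q x s hs b
    rw [show b+1+1 = b+2 from rfl, show b+0+1 = b+1 from rfl] at *
    simpa [qFibPos] using this
  | more d ih1 ih2 =>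
    have e1 : qFibPos q x s (b+1+(d+2)) = x * qFibPos q x s (b+1+(d+1))
        + q ^ (b+d+1) * s * qFibPos q x s (b+1+d) := by
      rw [show b+1+(d+2) = (b+d+1)+2 from by ring, qFibPos_add_two]
      congr 2 <;> [skip; skip] <;> congr 1 <;> omega
    have e2 : qFibPos q x (q*s) (b+(d+2)) = x * qFibPos q x (q*s) (b+(d+1))
        + q ^ (b+d) * (q*s) * qFibPos q x (q*s) (b+d) := by
      rw [show b+(d+2) = (b+d)+2 from by ring, qFibPos_add_two]
      congr 2 <;> congr 1 <;> omega
    have e3 : qFibPos q x (q^(b+1)*s) (d+2) = x * qFibPos q x (q^(b+1)*s) (d+1)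
        + q ^ d * (q^(b+1)*s) * qFibPos q x (q^(b+1)*s) d := qFibPos_add_two _ _ _ _
    rw [e1, e2, e3]
    have hq1 : q ^ (b+d) * (q * s) = q ^ (b+d+1) * s := by rw [pow_succ]; ring
    have hq2 : q ^ d * (q ^ (b+1) * s) = q ^ (b+d+1) * s := by rw [← mul_assoc, ← pow_add, Nat.add_succ, Nat.add_comm d b]
    rw [hq1] at *
    calc (x * qFibPos q x s (b+1+(d+1))
          + q^(b+d+1) * s * qFibPos q x s (b+1+d)) * qFibPos q x (q*s) b
          - qFibPos q x s (b+1) * (x * qFibPos q x (q*s) (b+(d+1))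
            + q^(b+d+1) * s * qFibPos q x (q*s) (b+d)) = x * (qFibPos q x s (b+1+(d+1)) * qFibPos q x (q*s) b
            - qFibPos q x s (b+1) * qFibPos q x (q*s) (b+(d+1)))
          + q^(b+d+1) * s * (qFibPos q x s (b+1+d) * qFibPos q x (q*s) b
            - qFibPos q x s (b+1) * qFibPos q x (q*s) (b+d)) := by ring
      _ = x * (ccc q s (b+1) * qFibPos q x (q^(b+1)*s) (d+1))
          + q^(b+d+1) * s * (ccc q s (b+1) * qFibPos q x (q^(b+1)*s) d) := by rw [ih2, ih1]
      _ = ccc q s (b+1) * (x * qFibPos q x (q^(b+1)*s) (d+1)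
          + q ^ d * (q^(b+1)*s) * qFibPos q x (q^(b+1)*s) d) := by rw [hq2]; ring

-- general key identity with casts
lemma keyE (q x s : K) (hq : q ≠ 0) (hs : s ≠ 0) (b a : ℕ) (hba : b ≤ a) :
    qFib q x s (a:ℤ) * qFib q x (q*s) ((b:ℤ)-1)
      - qFib q x s (b:ℤ) * qFib q x (q*s) ((a:ℤ)-1) =
    ccc q s b * qFib q x (q^b*s) ((a-b : ℕ) : ℤ) := by
  cases b with
  | zero =>
    have h1 : ((0:ℕ):ℤ) - 1 = -1 := by norm_num
    rw [h1, qFib_neg_one, qFib_natCast, qFib_natCast]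
    show qFibPos q x s a * (q / (q*s)) - qFibPos q x s 0 * _ = _
    have : (q / (q*s)) = 1/s := by field_simp
    rw [this, ccc, show Nat.choose 0 2 = 0 from rfl, Nat.sub_zero, pow_zero, pow_zero,
      one_mul, one_mul, qFib_natCast]
    have h0 : qFibPos q x s 0 = 0 := rfl
    rw [h0]
    ring
  | succ b' =>
    cases Nat.exists_eq_add_of_le hba with
    | intro d hd =>
      have h1 : ((b'+1 : ℕ):ℤ) - 1 = ((b' : ℕ) : ℤ) := by push_cast; ring
      have h2 : ((a : ℕ):ℤ) - 1 = ((b'+d : ℕ) : ℤ) := by subst hd; push_cast; ring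
      have h3 : a - (b'+1) = d := by omega
      rw [h1, h2, h3, qFib_natCast, qFib_natCast, qFib_natCast, qFib_natCast, qFib_natCast,
        show a = b'+1+d from hd]
      exact keyE' q x s hs b' d

def Af (j i : ℕ) : ℕ := i + if j ≤ i then 1 else 0

lemma Af_mono (j : ℕ) {i l : ℕ} (h : i < l) : Af j i < Af j l := by
  unfold Af; split_ifs <;> omega

lemma ddet_eq (q x s : K) (hq : q ≠ 0) (hs : s ≠ 0) (k j : ℕ) :
    ddet q x s 0 1 k j = (∏ i : Fin (k+1), ccc q s (Af j (i:ℕ)) ^ (k - (i:ℕ))) *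
      ∏ i : Fin (k+1), ∏ l ∈ Ioi i,
        qFib q x (q ^ (Af j (i:ℕ)) * s) (((Af j (l:ℕ)) - (Af j (i:ℕ)) : ℕ) : ℤ) := by
  have hidx : ∀ i : Fin (k+1),
      (0 : ℤ) + (1:ℕ) * ((i : ℕ) + if j ≤ (i : ℕ) then 1 else 0) = ((Af j (i:ℕ) : ℕ) : ℤ) := by
    intro i; unfold Af; split_ifs <;> push_cast <;> ring
  have hmat : (Matrix.of fun i h : Fin (k + 1) =>
      qFib q x s ((0:ℤ) + (1:ℕ) * ((i : ℕ) + if j ≤ (i : ℕ) then 1 else 0)) ^ (h : ℕ) *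
        qFib q x (q * s) ((0:ℤ) + (1:ℕ) * ((i : ℕ) + if j ≤ (i : ℕ) then 1 else 0) - 1) ^ (k - (h : ℕ)))
      = Matrix.of fun i h : Fin (k+1) =>
          (qFib q x s ((Af j (i:ℕ) : ℕ) : ℤ)) ^ (h:ℕ) *
          (qFib q x (q*s) (((Af j (i:ℕ) : ℕ) : ℤ) - 1)) ^ (k - (h:ℕ)) := by
    ext i h
    simp only [Matrix.of_apply]
    rw [hidx i]
  show Matrix.det _ = _
  rw [hmat, biVandermonde k _ _]
  have : ∀ i : Fin (k+1), ∀ l ∈ Ioi i,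
      qFib q x s ((Af j (l:ℕ) : ℕ) : ℤ) * qFib q x (q*s) (((Af j (i:ℕ) : ℕ) : ℤ) - 1)
      - qFib q x s ((Af j (i:ℕ) : ℕ) : ℤ) * qFib q x (q*s) (((Af j (l:ℕ) : ℕ) : ℤ) - 1)
      = ccc q s (Af j (i:ℕ)) * qFib q x (q ^ (Af j (i:ℕ)) * s) (((Af j (l:ℕ)) - (Af j (i:ℕ)) : ℕ) : ℤ) := by
    intro i l hl
    exact keyE q x s hq hs _ _ (le_of_lt (Af_mono j (Fin.lt_def.mp (Finset.mem_Ioi.mp hl))))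
  rw [Finset.prod_congr rfl fun i _ => Finset.prod_congr rfl fun l hl => this i l hl,
    ← Finset.prod_mul_distrib]
  refine Finset.prod_congr rfl fun i _ => ?_
  rw [Finset.prod_mul_distrib, Finset.prod_const, Fin.card_Ioi]
  congr 2

lemma Af_lt {j i : ℕ} (h : i < j) : Af j i = i := by unfold Af; rw [if_neg (by omega)]; omega
lemma Af_ge {j i : ℕ} (h : j ≤ i) : Af j i = i + 1 := by unfold Af; rw [if_pos h]

lemma fin_pairs (n : ℕ) (h : ℕ → ℕ → K) :
    (∏ i : Fin (n+1), ∏ l ∈ Ioi i, h (l:ℕ) (i:ℕ))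
      = ∏ b ∈ range (n+1), ∏ a ∈ Ico (b+1) (n+1), h a b := by
  rw [← Fin.prod_univ_eq_prod_range (fun b => ∏ a ∈ Ico (b+1) (n+1), h a b) (n+1)]
  refine Finset.prod_congr rfl fun i _ => ?_
  have hs : Finset.Ico ((i:ℕ)+1) (n+1) = (Ioi i).map Fin.valEmbedding := by
    rw [Fin.map_valEmbedding_Ioi]
    ext a
    simp only [Finset.mem_Ico, Finset.mem_Ioc, Finset.mem_Ioo]
    omega
  show (∏ l ∈ Ioi i, h (l:ℕ) (i:ℕ)) = ∏ a ∈ Ico ((i:ℕ)+1) (n+1), h a (i:ℕ)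
  rw [hs, Finset.prod_map]
  rfl

lemma SP (g : ℕ → ℕ → K) (k j : ℕ) (hj : j ≤ k + 1) :
    (∏ b ∈ range (k+1), ∏ a ∈ Ico (b+1) (k+1), g (Af j a - Af j b) (Af j b)) *
      (∏ b ∈ range j, g (j-b) b) * (∏ a ∈ Ico (j+1) (k+2), g (a-j) j)
    = ∏ b ∈ range (k+2), ∏ a ∈ Ico (b+1) (k+2), g (a-b) b := by
  set Row : ℕ → K := fun b => ∏ a ∈ Ico (b+1) (k+2), g (a-b) b with hRow
  have C2 : ∀ b, j ≤ b → b ≤ k →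
      (∏ a ∈ Ico (b+1) (k+1), g (Af j a - Af j b) (Af j b)) = Row (b+1) := by
    intro b hjb hbk
    have h1 : ∀ a ∈ Ico (b+1) (k+1), g (Af j a - Af j b) (Af j b) = g (a-b) (b+1) := by
      intro a ha
      have ha' := Finset.mem_Ico.mp ha
      rw [Af_ge hjb, Af_ge (by omega : j ≤ a)]
      congr 1
      omega
    rw [Finset.prod_congr rfl h1]
    show _ = ∏ a ∈ Ico ((b+1)+1) (k+2), g (a-(b+1)) (b+1)
    rw [Finset.prod_Ico_eq_prod_range, Finset.prod_Ico_eq_prod_range]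
    refine Finset.prod_congr (by congr 1; omega) fun i hi => ?_
    congr 1 <;> omega
  have C1 : ∀ b, b < j →
      (∏ a ∈ Ico (b+1) (k+1), g (Af j a - Af j b) (Af j b)) * g (j-b) b = Row b := by
    intro b hbj
    have hAb : Af j b = b := Af_lt hbj
    have hsplit : (∏ a ∈ Ico (b+1) j, g (Af j a - Af j b) (Af j b)) *
        (∏ a ∈ Ico j (k+1), g (Af j a - Af j b) (Af j b))
        = ∏ a ∈ Ico (b+1) (k+1), g (Af j a - Af j b) (Af j b) :=
      Finset.prod_Ico_consecutive _ (by omega) (by omega)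
    rw [← hsplit]
    have e1 : ∀ a ∈ Ico (b+1) j, g (Af j a - Af j b) (Af j b) = g (a-b) b := by
      intro a ha
      have ha' := Finset.mem_Ico.mp ha
      rw [hAb, Af_lt (by omega : a < j)]
    have e2 : (∏ a ∈ Ico j (k+1), g (Af j a - Af j b) (Af j b))
        = ∏ a ∈ Ico (j+1) (k+2), g (a-b) b := by
      have e2' : ∀ a ∈ Ico j (k+1), g (Af j a - Af j b) (Af j b) = g (a+1-b) b := by
        intro a ha
        have ha' := Finset.mem_Ico.mp ha
        rw [hAb, Af_ge (by omega : j ≤ a)]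
      rw [Finset.prod_congr rfl e2', Finset.prod_Ico_eq_prod_range, Finset.prod_Ico_eq_prod_range]

      refine Finset.prod_congr (by congr 1; omega) fun i hi => ?_
      congr 1
      omega
    rw [Finset.prod_congr rfl e1, e2]
    show _ = ∏ a ∈ Ico (b+1) (k+2), g (a-b) b
    have htop : (∏ a ∈ Ico (b+1) j, g (a-b) b) * g (j-b) b
        = ∏ a ∈ Ico (b+1) (j+1), g (a-b) b := by
      rw [Finset.prod_Ico_succ_top (by omega)]
    calc (∏ a ∈ Ico (b+1) j, g (a-b) b) * (∏ a ∈ Ico (j+1) (k+2), g (a-b) b) * g (j-b) b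
        = ((∏ a ∈ Ico (b+1) j, g (a-b) b) * g (j-b) b) * (∏ a ∈ Ico (j+1) (k+2), g (a-b) b) := by
          ring
      _ = (∏ a ∈ Ico (b+1) (j+1), g (a-b) b) * (∏ a ∈ Ico (j+1) (k+2), g (a-b) b) := by rw [htop]
      _ = ∏ a ∈ Ico (b+1) (k+2), g (a-b) b :=
          Finset.prod_Ico_consecutive _ (by omega) (by omega)
  -- assemble
  have hsplit0 : (∏ b ∈ Ico 0 j, ∏ a ∈ Ico (b+1) (k+1), g (Af j a - Af j b) (Af j b)) *
      (∏ b ∈ Ico j (k+1), ∏ a ∈ Ico (b+1) (k+1), g (Af j a - Af j b) (Af j b))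
      = ∏ b ∈ range (k+1), ∏ a ∈ Ico (b+1) (k+1), g (Af j a - Af j b) (Af j b) := by
    rw [Finset.range_eq_Ico]
    exact Finset.prod_Ico_consecutive _ (by omega) (by omega)
  rw [← hsplit0]
  have hC2 : (∏ b ∈ Ico j (k+1), ∏ a ∈ Ico (b+1) (k+1), g (Af j a - Af j b) (Af j b))
      = ∏ b ∈ Ico (j+1) (k+2), Row b := by
    rw [Finset.prod_congr rfl (fun b hb => C2 b (Finset.mem_Ico.mp hb).1
      (by have := (Finset.mem_Ico.mp hb).2; omega))]
    show _ = ∏ b ∈ Ico (j+1) (k+2), ∏ a ∈ Ico (b+1) (k+2), g (a-b) b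
    rw [Finset.prod_Ico_eq_prod_range, Finset.prod_Ico_eq_prod_range]
    refine Finset.prod_congr (by congr 1; omega) fun i hi => ?_
    congr 1
    omega
  have hC1 : (∏ b ∈ Ico 0 j, ∏ a ∈ Ico (b+1) (k+1), g (Af j a - Af j b) (Af j b)) *
      (∏ b ∈ range j, g (j-b) b) = ∏ b ∈ range j, Row b := by
    rw [← Finset.range_eq_Ico, ← Finset.prod_mul_distrib]
    exact Finset.prod_congr rfl fun b hb => C1 b (Finset.mem_range.mp hb)
  calc (∏ b ∈ Ico 0 j, ∏ a ∈ Ico (b+1) (k+1), g (Af j a - Af j b) (Af j b)) *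
        (∏ b ∈ Ico j (k+1), ∏ a ∈ Ico (b+1) (k+1), g (Af j a - Af j b) (Af j b)) *
        (∏ b ∈ range j, g (j-b) b) * (∏ a ∈ Ico (j+1) (k+2), g (a-j) j)
      = ((∏ b ∈ Ico 0 j, ∏ a ∈ Ico (b+1) (k+1), g (Af j a - Af j b) (Af j b)) *
          (∏ b ∈ range j, g (j-b) b)) *
        (∏ b ∈ Ico j (k+1), ∏ a ∈ Ico (b+1) (k+1), g (Af j a - Af j b) (Af j b)) *
        (∏ a ∈ Ico (j+1) (k+2), g (a-j) j) := by ring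
    _ = (∏ b ∈ range j, Row b) * (∏ b ∈ Ico (j+1) (k+2), Row b) * Row j := by
        rw [hC1, hC2]
    _ = ((∏ b ∈ range j, Row b) * Row j) * (∏ b ∈ Ico (j+1) (k+2), Row b) := by ring
    _ = (∏ b ∈ range (j+1), Row b) * (∏ b ∈ Ico (j+1) (k+2), Row b) := by
        rw [Finset.prod_range_succ]
    _ = (∏ b ∈ Ico 0 (j+1), Row b) * (∏ b ∈ Ico (j+1) (k+2), Row b) := by
        rw [Finset.range_eq_Ico]
    _ = ∏ b ∈ Ico 0 (k+2), Row b := Finset.prod_Ico_consecutive _ (by omega) (by omega)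
    _ = ∏ b ∈ range (k+2), Row b := by rw [Finset.range_eq_Ico]

lemma CC_ratio (q s : K) (hq : q ≠ 0) (hs : s ≠ 0) (k : ℕ) :
    ∀ j, j ≤ k + 1 →
    (∏ i : Fin (k+1), ccc q s (Af j (i:ℕ)) ^ (k - (i:ℕ)))
      = (-s) ^ ((j.choose 2 : ℤ) - k * j) *
        q ^ (-(k:ℤ) * j.choose 2 + ∑ i ∈ Finset.range j, (i:ℤ)^2) *
        ∏ i : Fin (k+1), ccc q s (Af 0 (i:ℕ)) ^ (k - (i:ℕ)) := by
  intro j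
  induction j with
  | zero => intro _; norm_num
  | succ j ih =>
    intro hj1
    have hjk : j ≤ k := by omega
    have ihe := ih (by omega)
    set Pi0 := ∏ i : Fin (k+1), ccc q s (Af 0 (i:ℕ)) ^ (k - (i:ℕ)) with hPi0
    have hns : (-s) ≠ 0 := neg_ne_zero.mpr hs
    set jf : Fin (k+1) := ⟨j, by omega⟩ with hjf
    have hsplit : ∀ j' : ℕ, (∏ i : Fin (k+1), ccc q s (Af j' (i:ℕ)) ^ (k - (i:ℕ)))
        = ccc q s (Af j' j) ^ (k - j) *
          ∏ i ∈ (univ.erase jf), ccc q s (Af j' (i:ℕ)) ^ (k - (i:ℕ)) := by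
      intro j'
      rw [← Finset.mul_prod_erase univ _ (mem_univ jf)]
    have herase : ∏ i ∈ (univ.erase jf), ccc q s (Af (j+1) (i:ℕ)) ^ (k - (i:ℕ))
        = ∏ i ∈ (univ.erase jf), ccc q s (Af j (i:ℕ)) ^ (k - (i:ℕ)) := by
      refine Finset.prod_congr rfl fun i hi => ?_
      have hne : (i : ℕ) ≠ j := by
        intro h
        exact (Finset.mem_erase.mp hi).1 (Fin.ext (by simp [hjf, h]))
      congr 2
      unfold Af
      split_ifs <;> omega
    have hAj : Af j j = j + 1 := by unfold Af; simp
    have hAj1 : Af (j+1) j = j := by unfold Af; simp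
    have hrel : (∏ i : Fin (k+1), ccc q s (Af j (i:ℕ)) ^ (k - (i:ℕ)))
        = ((-s) * q^j) ^ (k - j) *
          ∏ i : Fin (k+1), ccc q s (Af (j+1) (i:ℕ)) ^ (k - (i:ℕ)) := by
      rw [hsplit j, hsplit (j+1), herase, hAj, hAj1, ccc_succ, ← mul_assoc]
      congr 2
      rw [← mul_pow]
      congr 1
      ring
    have hpow_ne : ((-s) * q^j : K) ^ (k - j) ≠ 0 :=
      pow_ne_zero _ (mul_ne_zero hns (pow_ne_zero _ hq))
    apply mul_left_cancel₀ hpow_ne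
    rw [← hrel, ihe]
    -- now pure constant identity
    rw [mul_pow, ← pow_mul]
    rw [← zpow_natCast (-s) (k-j), ← zpow_natCast q (j*(k-j))]
    have hch : (j+1).choose 2 = j.choose 2 + j := by
      simp [Nat.choose_succ_succ, Nat.choose_one_right, Nat.add_comm]
    have eE : ((j.choose 2 : ℤ) - (k:ℤ) * (j:ℤ))
        = (((k-j:ℕ):ℕ):ℤ) + ((((j+1).choose 2 : ℕ):ℤ) - (k:ℤ) * ((j+1:ℕ):ℤ)) := by
      rw [hch]; push_cast [Nat.cast_sub hjk]; ring
    have eF : (-(k:ℤ) * (j.choose 2:ℕ) + ∑ i ∈ Finset.range j, (i:ℤ)^2)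
        = ((j*(k-j):ℕ):ℤ) + (-(k:ℤ) * (((j+1).choose 2:ℕ):ℤ) + ∑ i ∈ Finset.range (j+1), (i:ℤ)^2) := by
      rw [hch, Finset.sum_range_succ]; push_cast [Nat.cast_sub hjk]; ring
    rw [eE, eF, zpow_add₀ hns, zpow_add₀ hq]
    ring

theorem ddet_ratio (q x s : K) (hq : q ≠ 0) (hs : s ≠ 0)
    (k j : ℕ) (hk : 1 ≤ k) (hjk : j ≤ k + 1)
    (hd : ddet q x s 0 1 k 0 ≠ 0)
    (hden1 : ∀ i, 1 ≤ i → i ≤ j → qFib q x (q ^ (j - i) * s) (i : ℤ) ≠ 0)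
    (hden2 : ∀ i, 1 ≤ i → i ≤ k + 1 - j → qFib q x (q ^ j * s) (i : ℤ) ≠ 0) :
    ddet q x s 0 1 k j / ddet q x s 0 1 k 0 =
      (-s) ^ ((j.choose 2 : ℤ) - k * j) *
      q ^ (-(k : ℤ) * j.choose 2 + ∑ i ∈ Finset.range j, (i : ℤ) ^ 2) *
      qFibonomial q x s (k + 1) j := by
  have hdj := ddet_eq q x s hq hs k j
  have hd0 := ddet_eq q x s hq hs k 0
  have hCC := CC_ratio q s hq hs k j hjk
  -- Fin → ℕ conversions of the pair products
  have hfinj := fin_pairs k (fun a b => qFib q x (q ^ (Af j b) * s) ((Af j a - Af j b : ℕ) : ℤ))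
  have hfin0 := fin_pairs k (fun a b => qFib q x (q ^ (Af 0 b) * s) ((Af 0 a - Af 0 b : ℕ) : ℤ))
  have hSPj := SP (fun d b => qFib q x (q ^ b * s) (d : ℤ)) k j hjk
  have hSP0 := SP (fun d b => qFib q x (q ^ b * s) (d : ℤ)) k 0 (by omega)
  -- side product conversions
  have hN : (∏ a ∈ Ico (0+1) (k+2), qFib q x (q ^ (0:ℕ) * s) ((a - 0 : ℕ) : ℤ))
      = ∏ i ∈ Finset.range (k+1), qFib q x s ((i:ℤ) + 1) := by
    rw [Finset.prod_Ico_eq_prod_range]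
    refine Finset.prod_congr (by congr 1) fun i hi => ?_
    rw [pow_zero, one_mul]
    congr 1
    push_cast
    omega
  have hD2 : (∏ a ∈ Ico (j+1) (k+2), qFib q x (q ^ j * s) ((a - j : ℕ) : ℤ))
      = ∏ i ∈ Finset.range (k+1-j), qFib q x (q ^ j * s) ((i:ℤ) + 1) := by
    rw [Finset.prod_Ico_eq_prod_range]
    refine Finset.prod_congr (by congr 1; omega) fun i hi => ?_
    congr 1
    push_cast
    omega
  have hD1 : (∏ b ∈ Finset.range j, qFib q x (q ^ b * s) ((j - b : ℕ) : ℤ))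
      = ∏ i ∈ Finset.range j, qFib q x (q ^ (j - (i+1)) * s) ((i:ℤ) + 1) := by
    rw [← Finset.prod_range_reflect (fun b => qFib q x (q ^ b * s) ((j - b : ℕ) : ℤ)) j]
    refine Finset.prod_congr rfl fun i hi => ?_
    have hi' := Finset.mem_range.mp hi
    have he : j - 1 - i = j - (i+1) := by omega
    rw [he]
    congr 1
    omega
  -- key product identity
  have hSPj' : (∏ i : Fin (k+1), ∏ l ∈ Ioi i,
        qFib q x (q ^ (Af j (i:ℕ)) * s) ((Af j (l:ℕ) - Af j (i:ℕ) : ℕ) : ℤ)) *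
      ((∏ i ∈ Finset.range j, qFib q x (q ^ (j - (i+1)) * s) ((i:ℤ) + 1)) *
        (∏ i ∈ Finset.range (k+1-j), qFib q x (q ^ j * s) ((i:ℤ) + 1)))
      = ∏ b ∈ Finset.range (k+2), ∏ a ∈ Ico (b+1) (k+2), qFib q x (q ^ b * s) ((a - b : ℕ) : ℤ) := by
    rw [hfinj, ← hD1, ← hD2, ← mul_assoc]
    exact hSPj
  have hSP0' : (∏ i : Fin (k+1), ∏ l ∈ Ioi i,
        qFib q x (q ^ (Af 0 (i:ℕ)) * s) ((Af 0 (l:ℕ) - Af 0 (i:ℕ) : ℕ) : ℤ)) *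
      (∏ i ∈ Finset.range (k+1), qFib q x s ((i:ℤ) + 1))
      = ∏ b ∈ Finset.range (k+2), ∏ a ∈ Ico (b+1) (k+2), qFib q x (q ^ b * s) ((a - b : ℕ) : ℤ) := by
    rw [hfin0, ← hN]
    simpa using hSP0
  have hkey := hSPj'.trans hSP0'.symm
  -- nonzero facts
  have hCC0ne : (∏ i : Fin (k+1), ccc q s (Af 0 (i:ℕ)) ^ (k - (i:ℕ))) ≠ 0 :=
    Finset.prod_ne_zero_iff.mpr fun i _ => pow_ne_zero _ (ccc_ne_zero hq hs _)
  have hP0ne : (∏ i : Fin (k+1), ∏ l ∈ Ioi i,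
      qFib q x (q ^ (Af 0 (i:ℕ)) * s) ((Af 0 (l:ℕ) - Af 0 (i:ℕ) : ℕ) : ℤ)) ≠ 0 := by
    rw [hd0] at hd
    exact right_ne_zero_of_mul hd
  have hDen1ne : (∏ i ∈ Finset.range j, qFib q x (q ^ (j - (i+1)) * s) ((i:ℤ) + 1)) ≠ 0 :=
    Finset.prod_ne_zero_iff.mpr fun i hi => by
      have := hden1 (i+1) (by omega) (by have := Finset.mem_range.mp hi; omega)
      rwa [show ((i+1:ℕ):ℤ) = (i:ℤ)+1 by push_cast; ring] at this
  have hDen2ne : (∏ i ∈ Finset.range (k+1-j), qFib q x (q ^ j * s) ((i:ℤ) + 1)) ≠ 0 :=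
    Finset.prod_ne_zero_iff.mpr fun i hi => by
      have := hden2 (i+1) (by omega) (by have := Finset.mem_range.mp hi; omega)
      rwa [show ((i+1:ℕ):ℤ) = (i:ℤ)+1 by push_cast; ring] at this
  rw [hdj, hd0, hCC, qFibonomial]
  set R : K := (-s) ^ ((j.choose 2 : ℤ) - k * j) *
      q ^ (-(k : ℤ) * j.choose 2 + ∑ i ∈ Finset.range j, (i : ℤ) ^ 2) with hR
  have hkp : k + 1 - j = k + 1 - j := rfl
  rw [mul_div_assoc', div_eq_div_iff (mul_ne_zero hCC0ne hP0ne) (mul_ne_zero hDen1ne hDen2ne)]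
  linear_combination (R * (∏ i : Fin (k+1), ccc q s (Af 0 (i:ℕ)) ^ (k - (i:ℕ)))) * hkey
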